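/- Let X and Y be complex Banach spaces, U ⊆ ℂ open, and ω₀ ∈ U. Let P : U → L(X,Y) be analytic, let Π ∈ L(Y,X) with Π ≠ 0, and let R₀ : U → L(Y,X) be analytic; for ω ∈ U ∖ {ω₀} set R(ω) := (ω−ω₀)^{−1}·Π + R₀(ω), and assume P(ω) ∘ R(ω) = id_Y and R(ω) ∘ P(ω) = id_X for all ω ∈ U ∖ {ω₀}. Assume further that there exist u₀ ∈ X ∖ {0} and a continuous linear functional v₀ ∈ Y* ∖ {0} such that ker P(ω₀) = ℂ·u₀ and {v ∈ Y* : v ∘ P(ω₀) = 0} = ℂ·v₀. Then ⟨P′(ω₀)u₀, v₀⟩ ≠ 0, and for every f ∈ Y one has Π f = (⟨f, v₀⟩ / ⟨P′(ω₀)u₀, v₀⟩) · u₀, where P′(ω₀) denotes the derivative of the analytic family P at ω₀ and ⟨·,·⟩ the duality pairing between Y and Y*. In particular, the range of Π equals ℂ·u₀. -/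

import Mathlib

/-- Rank-one structure of the residue of a meromorphic Fredholm inverse at a
simple pole: the residue projector is given by a pairing with the dual
resonant state. -/
theorem rank_one_residue_at_simple_pole
    {X Y : Type*} [NormedAddCommGroup X] [NormedSpace ℂ X]
    [NormedAddCommGroup Y] [NormedSpace ℂ Y]
    (U : Set ℂ) (hU : IsOpen U) (ω₀ : ℂ) (hω₀ : ω₀ ∈ U)
    (P : ℂ → (X →L[ℂ] Y)) (hP : ∀ ω ∈ U, AnalyticAt ℂ P ω)
    (Pr : Y →L[ℂ] X) (hPr : Pr ≠ 0)
    (R₀ : ℂ → (Y →L[ℂ] X)) (hR₀ : ∀ ω ∈ U, AnalyticAt ℂ R₀ ω)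
    (hPR : ∀ ω ∈ U \ {ω₀},
      (P ω).comp (((ω - ω₀)⁻¹ • Pr) + R₀ ω) = ContinuousLinearMap.id ℂ Y)
    (hRP : ∀ ω ∈ U \ {ω₀},
      ((((ω - ω₀)⁻¹ • Pr) + R₀ ω)).comp (P ω) = ContinuousLinearMap.id ℂ X)
    (u₀ : X) (hu₀ : u₀ ≠ 0) (v₀ : Y →L[ℂ] ℂ) (hv₀ : v₀ ≠ 0)
    (hker : LinearMap.ker (P ω₀ : X →ₗ[ℂ] Y) = Submodule.span ℂ {u₀})
    (hcoker : {v : Y →L[ℂ] ℂ | v.comp (P ω₀) = 0} = {v | ∃ c : ℂ, v = c • v₀}) :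
    v₀ ((deriv P ω₀) u₀) ≠ 0 ∧
    (∀ f : Y, Pr f = (v₀ f / v₀ ((deriv P ω₀) u₀)) • u₀) ∧
    Set.range (⇑Pr) = {x : X | ∃ c : ℂ, x = c • u₀} := by
  set Q : ℂ → (Y →L[ℂ] Y) := fun ω => (P ω).comp Pr with hQdef
  set F : ℂ → (Y →L[ℂ] Y) :=
    fun ω => ContinuousLinearMap.id ℂ Y - (P ω).comp (R₀ ω) with hFdef
  set H : ℂ → (Y →L[ℂ] Y) := fun ω => (ω - ω₀) • F ω with hHdef
  have hUnhds : U ∈ nhds ω₀ := hU.mem_nhds hω₀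
  -- Off ω₀, Q = H
  have hQH : ∀ ω ∈ U \ {ω₀}, Q ω = H ω := by
    intro ω hω
    have hne : ω - ω₀ ≠ 0 := sub_ne_zero.mpr hω.2
    have h := hPR ω hω
    rw [ContinuousLinearMap.comp_add, ContinuousLinearMap.comp_smul] at h
    have h2 : (ω - ω₀)⁻¹ • Q ω = F ω := by
      rw [hFdef, eq_sub_iff_add_eq]; exact h
    calc Q ω = (ω - ω₀) • ((ω - ω₀)⁻¹ • Q ω) := by
            rw [smul_smul, mul_inv_cancel₀ hne, one_smul]
      _ = H ω := by rw [h2]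
  -- continuity facts
  have hFdiff : ∀ ω ∈ U, DifferentiableAt ℂ F ω := by
    intro ω hω
    exact (differentiableAt_const _).sub
      ((hP ω hω).differentiableAt.clm_comp (hR₀ ω hω).differentiableAt)
  have hQdiff : DifferentiableAt ℂ Q ω₀ :=
    (hP ω₀ hω₀).differentiableAt.clm_comp (differentiableAt_const _)
  have hHdiff : DifferentiableAt ℂ H ω₀ :=
    ((differentiableAt_id.sub (differentiableAt_const _)).smul (hFdiff ω₀ hω₀))
  -- Q ω₀ = H ω₀ ( = 0 ) by continuity through the punctured neighborhood
  have hmemp : U \ {ω₀} ∈ nhdsWithin ω₀ {ω₀}ᶜ := by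
    rw [Set.diff_eq]
    exact Filter.inter_mem (mem_nhdsWithin_of_mem_nhds hUnhds) self_mem_nhdsWithin
  have hQH0 : Q ω₀ = H ω₀ := by
    have h1 : Filter.Tendsto Q (nhdsWithin ω₀ {ω₀}ᶜ) (nhds (Q ω₀)) :=
      hQdiff.continuousAt.tendsto.mono_left nhdsWithin_le_nhds
    have h2 : Filter.Tendsto H (nhdsWithin ω₀ {ω₀}ᶜ) (nhds (H ω₀)) :=
      hHdiff.continuousAt.tendsto.mono_left nhdsWithin_le_nhds
    have hev : Q =ᶠ[nhdsWithin ω₀ {ω₀}ᶜ] H := by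
      filter_upwards [hmemp] with ω hω using hQH ω hω
    exact tendsto_nhds_unique_of_eventuallyEq h1 h2 hev
  have hQ0 : Q ω₀ = 0 := by
    rw [hQH0]; simp [hHdef]
  -- Q and H agree on a neighborhood of ω₀
  have hev : Q =ᶠ[nhds ω₀] H := by
    filter_upwards [hUnhds] with ω hω
    rcases eq_or_ne ω ω₀ with rfl | hne
    · exact hQH0
    · exact hQH ω ⟨hω, hne⟩
  -- derivative of Q at ω₀
  have hPd : HasDerivAt P (deriv P ω₀) ω₀ := (hP ω₀ hω₀).differentiableAt.hasDerivAt
  have hQd : HasDerivAt Q ((deriv P ω₀).comp Pr) ω₀ := by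
    have := ((ContinuousLinearMap.compL ℂ Y X Y).flip Pr).hasFDerivAt.comp_hasDerivAt ω₀ hPd
    exact this
  -- derivative of H at ω₀
  have hHd : HasDerivAt H (F ω₀) ω₀ := by
    have hc : HasDerivAt (fun ω : ℂ => ω - ω₀) 1 ω₀ := (hasDerivAt_id ω₀).sub_const ω₀
    have hFd : HasDerivAt F (deriv F ω₀) ω₀ := (hFdiff ω₀ hω₀).hasDerivAt
    have := hc.smul hFd
    simp only [sub_self, zero_smul, zero_add, one_smul] at this
    exact this
  -- key identity
  have hkey : (deriv P ω₀).comp Pr = ContinuousLinearMap.id ℂ Y - (P ω₀).comp (R₀ ω₀) := by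
    have h1 : deriv Q ω₀ = deriv H ω₀ := hev.deriv_eq
    rw [← hQd.deriv, h1, hHd.deriv]
  -- v₀ annihilates range of P ω₀
  have hv₀mem : v₀ ∈ {v : Y →L[ℂ] ℂ | ∃ c : ℂ, v = c • v₀} := ⟨1, (one_smul _ _).symm⟩
  rw [← hcoker] at hv₀mem
  have hv₀P : ∀ x : X, v₀ (P ω₀ x) = 0 := by
    intro x
    have := congrFun (congrArg (DFunLike.coe) hv₀mem) x
    simpa using this
  -- pairing identity
  have hpair : ∀ f : Y, v₀ ((deriv P ω₀) (Pr f)) = v₀ f := by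
    intro f
    have := congrFun (congrArg (DFunLike.coe) hkey) f
    simp only [ContinuousLinearMap.comp_apply, ContinuousLinearMap.sub_apply,
      ContinuousLinearMap.id_apply] at this
    rw [this, map_sub, hv₀P, sub_zero]
  -- each Pr f is a multiple of u₀
  have hscal : ∀ f : Y, ∃ c : ℂ, Pr f = c • u₀ := by
    intro f
    have hmem : Pr f ∈ LinearMap.ker (P ω₀ : X →ₗ[ℂ] Y) := by
      have := congrFun (congrArg (DFunLike.coe) hQ0) f
      simpa [hQdef] using this
    rw [hker] at hmem
    rcases Submodule.mem_span_singleton.mp hmem with ⟨c, hc⟩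
    exact ⟨c, hc.symm⟩
  set d : ℂ := v₀ ((deriv P ω₀) u₀) with hd
  have hcd : ∀ f : Y, ∀ c : ℂ, Pr f = c • u₀ → c * d = v₀ f := by
    intro f c hc
    have := hpair f
    rw [hc] at this
    simpa [hd, mul_comm] using this
  have hdne : d ≠ 0 := by
    intro h0
    apply hv₀
    ext f
    rcases hscal f with ⟨c, hc⟩
    have := hcd f c hc
    rw [h0, mul_zero] at this
    simpa using this.symm
  have hform : ∀ f : Y, Pr f = (v₀ f / d) • u₀ := by
    intro f
    rcases hscal f with ⟨c, hc⟩
    have hcv := hcd f c hc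
    have : c = v₀ f / d := by field_simp [← hcv, mul_comm]; exact hcv
    rw [hc, this]
  refine ⟨hdne, hform, ?_⟩
  ext x
  constructor
  · rintro ⟨f, rfl⟩
    exact ⟨v₀ f / d, hform f⟩
  · rintro ⟨c, rfl⟩
    obtain ⟨g, hg⟩ : ∃ g : Y, v₀ g ≠ 0 := by
      by_contra h
      push_neg at h
      exact hv₀ (by ext g; simpa using h g)
    refine ⟨(c * d / v₀ g) • g, ?_⟩
    rw [hform, map_smul, smul_eq_mul]
    congr 1
    field_simp
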